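/- If the Riemann zeta-function were strongly universal in D(1/2,1), then for every 1/2 < σ₁ < σ₂ < 1 there would be a constant C > 0 with N(T;σ₁,σ₂;ζ) ≥ CT for large T; since the zero-density estimate N(T;σ₁,σ₂;ζ) = o(T) holds, ζ cannot be strongly universal in D(1/2,1). -/

import Mathlib

open Complex Filter MeasureTheory Set

/-- The lower density of a set of real numbers. -/
noncomputable def lowerDensity (S : Set ℝ) : ℝ :=
  Filter.liminf (fun T : ℝ => (MeasureTheory.volume (S ∩ Set.Icc 0 T)).toReal / T)
    Filter.atTop

/-- The number of zeros `ρ` of `φ` with `σ₁ ≤ Re ρ ≤ σ₂` and `0 ≤ Im ρ ≤ T`. -/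
noncomputable def zeroCount (φ : ℂ → ℂ) (σ₁ σ₂ T : ℝ) : ℕ :=
  Set.ncard {ρ : ℂ | φ ρ = 0 ∧ σ₁ ≤ ρ.re ∧ ρ.re ≤ σ₂ ∧ 0 ≤ ρ.im ∧ ρ.im ≤ T}

/-- Strong universality of `ζ` in `D(1/2,1)` in the sense of Voronin. -/
def ZetaStronglyUniversal : Prop :=
  ∀ K : Set ℂ, IsCompact K → K ⊆ {s : ℂ | 1/2 < s.re ∧ s.re < 1} →
    IsConnected Kᶜ → ∀ f : ℂ → ℂ, ContinuousOn f K →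
    DifferentiableOn ℂ f (interior K) → ∀ ε : ℝ, 0 < ε →
    0 < lowerDensity {τ : ℝ | ∀ s ∈ K, ‖riemannZeta (s + τ * Complex.I) - f s‖ < ε}

/-- The complement of a closed ball in `ℂ` is connected. -/
lemma aux_isConnected_compl_closedBall (c : ℂ) {r : ℝ} (hr : 0 < r) :
    IsConnected (Metric.closedBall c r)ᶜ := by
  have hrank : 1 < Module.rank ℝ ℂ := by rw [Complex.rank_real_complex]; norm_num
  have hprod : IsConnected ((Set.Ioi r) ×ˢ (Metric.sphere (0:ℂ) 1)) :=
    (isConnected_Ioi).prod (isConnected_sphere hrank 0 zero_le_one)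
  have himg : (fun p : ℝ × ℂ => c + p.1 • p.2) '' ((Set.Ioi r) ×ˢ (Metric.sphere (0:ℂ) 1))
      = (Metric.closedBall c r)ᶜ := by
    ext z
    simp only [Set.mem_image, Set.mem_prod, Set.mem_Ioi, Metric.mem_sphere,
      Set.mem_compl_iff, Metric.mem_closedBall, not_le, Prod.exists]
    constructor
    · rintro ⟨t, u, ⟨ht, hu⟩, rfl⟩
      rw [dist_eq_norm]
      have : c + t • u - c = t • u := by ring_nf
      rw [this, norm_smul, Real.norm_eq_abs]
      rw [dist_eq_norm, sub_zero] at hu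
      rw [hu, mul_one, abs_of_pos (hr.trans ht)]
      exact ht
    · intro hz
      rw [dist_eq_norm] at hz
      have hne : ‖z - c‖ ≠ 0 := ne_of_gt (hr.trans hz)
      refine ⟨‖z - c‖, ‖z - c‖⁻¹ • (z - c), ⟨hz, ?_⟩, ?_⟩
      · rw [dist_eq_norm, sub_zero, norm_smul, Real.norm_eq_abs, abs_inv, abs_norm,
          inv_mul_cancel₀ hne]
      · rw [smul_smul, mul_inv_cancel₀ hne, one_smul]; ring
  rw [← himg]
  exact hprod.image _ (by fun_prop)

/-- The zeros of `ζ` in a compact box to the left of `Re s = 1` form a finite set. -/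
lemma aux_zeta_zeros_finite {σ₁ σ₂ T : ℝ} (h2 : σ₂ < 1) :
    {ρ : ℂ | riemannZeta ρ = 0 ∧ σ₁ ≤ ρ.re ∧ ρ.re ≤ σ₂ ∧ 0 ≤ ρ.im ∧ ρ.im ≤ T}.Finite := by
  set Z := {ρ : ℂ | riemannZeta ρ = 0 ∧ σ₁ ≤ ρ.re ∧ ρ.re ≤ σ₂ ∧ 0 ≤ ρ.im ∧ ρ.im ≤ T} with hZ
  by_contra hinf
  have hinf' : Z.Infinite := hinf
  have hbox : IsCompact (Complex.re ⁻¹' Set.Icc σ₁ σ₂ ∩ Complex.im ⁻¹' Set.Icc 0 T) := by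
    apply Metric.isCompact_of_isClosed_isBounded
    · exact (isClosed_Icc.preimage Complex.continuous_re).inter
        (isClosed_Icc.preimage Complex.continuous_im)
    · rw [Metric.isBounded_iff_subset_closedBall 0]
      refine ⟨|σ₁| + |σ₂| + |T|, fun z hz => ?_⟩
      obtain ⟨⟨h1, h2'⟩, h3, h4⟩ := hz
      simp only [Metric.mem_closedBall, dist_zero_right]
      have hre : |z.re| ≤ |σ₁| + |σ₂| := by
        rw [abs_le]
        constructor
        · linarith [neg_abs_le σ₁, abs_nonneg σ₂]
        · linarith [le_abs_self σ₂, abs_nonneg σ₁]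
      have him : |z.im| ≤ |T| :=
        abs_le.mpr ⟨by linarith [abs_nonneg T], by linarith [le_abs_self T]⟩
      calc ‖z‖ ≤ |z.re| + |z.im| := Complex.norm_le_abs_re_add_abs_im z
        _ ≤ |σ₁| + |σ₂| + |T| := by linarith
  have hsub : Z ⊆ Complex.re ⁻¹' Set.Icc σ₁ σ₂ ∩ Complex.im ⁻¹' Set.Icc 0 T := by
    rintro ρ ⟨_, ha, hb, hc, hd⟩
    exact ⟨⟨ha, hb⟩, hc, hd⟩
  obtain ⟨x, hxK, hx⟩ := hinf'.exists_accPt_of_subset_isCompact hbox hsub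
  have hx1 : x ≠ 1 := by
    intro h
    have := hxK.1.2
    rw [h] at this
    simp at this
    linarith
  have han : AnalyticOnNhd ℂ riemannZeta {(1:ℂ)}ᶜ := by
    apply DifferentiableOn.analyticOnNhd _ (isOpen_compl_singleton)
    exact fun z hz => (differentiableAt_riemannZeta hz).differentiableWithinAt
  rcases (han x hx1).eventually_eq_zero_or_eventually_ne_zero with hev | hev
  · have hU : IsPreconnected ({(1:ℂ)}ᶜ : Set ℂ) := by
      have hrank : 1 < Module.rank ℝ ℂ := by rw [Complex.rank_real_complex]; norm_num
      exact (isConnected_compl_singleton_of_one_lt_rank hrank 1).isPreconnected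
    have := han.eqOn_zero_of_preconnected_of_eventuallyEq_zero hU hx1 hev
    have h2' : riemannZeta 2 = 0 := this (by norm_num : (2:ℂ) ≠ 1)
    exact riemannZeta_ne_zero_of_one_lt_re (by norm_num) h2'
  · have hfreq : ∃ᶠ z in nhdsWithin x {x}ᶜ, z ∈ Z :=
      Filter.frequently_mem_iff_neBot.mpr hx
    have : ∃ᶠ z in nhdsWithin x {x}ᶜ, riemannZeta z = 0 := hfreq.mono (fun z hz => hz.1)
    exact this hev

/-- If `ζ(· + iτ)` approximates `s - s₀` to within `r/4` on the closed ball of radius `r`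
around `s₀`, then `ζ(· + iτ)` has a zero in the open ball. -/
lemma aux_exists_zero {s₀ : ℂ} (hs₀ : s₀.im = 0) {r τ : ℝ} (hr : 0 < r) (hτ : r < τ)
    (happ : ∀ s ∈ Metric.closedBall s₀ r, ‖riemannZeta (s + τ * Complex.I) - (s - s₀)‖ < r / 4) :
    ∃ z ∈ Metric.ball s₀ r, riemannZeta (z + τ * Complex.I) = 0 := by
  by_contra hno
  push_neg at hno
  set F : ℂ → ℂ := fun z => riemannZeta (z + τ * Complex.I) with hF
  have hne1 : ∀ z ∈ Metric.closedBall s₀ r, z + τ * Complex.I ≠ 1 := by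
    intro z hz h
    have him : (z + τ * Complex.I).im = z.im + τ := by simp
    rw [h] at him
    simp only [Complex.one_im] at him
    have : |z.im - s₀.im| ≤ r := by
      have := Complex.abs_im_le_norm (z - s₀)
      simp only [Complex.sub_im] at this
      calc |z.im - s₀.im| ≤ ‖z - s₀‖ := this
        _ ≤ r := by rw [← Complex.dist_eq] at *; exact Metric.mem_closedBall.mp hz
    rw [hs₀, sub_zero] at this
    have : -r ≤ z.im := (abs_le.mp this).1
    linarith
  have hFdiff : ∀ z ∈ Metric.closedBall s₀ r, DifferentiableAt ℂ F z := by
    intro z hz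
    exact (differentiableAt_riemannZeta (hne1 z hz)).comp z
      ((differentiableAt_id).add_const _)
  have hsphere : ∀ z ∈ Metric.sphere s₀ r, (3/4) * r ≤ ‖F z‖ := by
    intro z hz
    have hz' : z ∈ Metric.closedBall s₀ r := Metric.sphere_subset_closedBall hz
    have h1 := happ z hz'
    have h2 : ‖z - s₀‖ = r := by rw [← dist_eq_norm]; exact Metric.mem_sphere.mp hz
    have := norm_sub_norm_le (z - s₀) (z - s₀ - F z)
    have h3 : z - s₀ - (z - s₀ - F z) = F z := by ring
    rw [h3, h2] at this
    have h4 : ‖z - s₀ - F z‖ = ‖F z - (z - s₀)‖ := by rw [norm_sub_rev]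
    rw [h4] at this
    linarith
  have hFne : ∀ z ∈ Metric.closedBall s₀ r, F z ≠ 0 := by
    intro z hz
    rcases eq_or_lt_of_le (Metric.mem_closedBall.mp hz) with h | h
    · intro h0
      have := hsphere z (Metric.mem_sphere.mpr h.symm.symm)
      rw [h0, norm_zero] at this
      nlinarith
    · exact hno z (Metric.mem_ball.mpr h)
  have hdcc : DiffContOnCl ℂ (fun z => (F z)⁻¹) (Metric.ball s₀ r) := by
    constructor
    · intro z hz
      exact ((hFdiff z (Metric.ball_subset_closedBall hz)).inv
        (hFne z (Metric.ball_subset_closedBall hz))).differentiableWithinAt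
    · rw [closure_ball s₀ hr.ne']
      intro z hz
      exact ((hFdiff z hz).continuousAt.inv₀ (hFne z hz)).continuousWithinAt
  have hbound : ∀ z ∈ frontier (Metric.ball s₀ r), ‖(F z)⁻¹‖ ≤ ((3/4) * r)⁻¹ := by
    rw [frontier_ball s₀ hr.ne']
    intro z hz
    rw [norm_inv]
    exact inv_anti₀ (by linarith) (hsphere z hz)
  have hs₀mem : s₀ ∈ closure (Metric.ball s₀ r) := by
    rw [closure_ball s₀ hr.ne']
    exact Metric.mem_closedBall_self hr.le
  have hmax := Complex.norm_le_of_forall_mem_frontier_norm_le (Metric.isBounded_ball)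
    hdcc hbound hs₀mem
  rw [norm_inv] at hmax
  have hFs₀ : ‖F s₀‖ < r / 4 := by
    have := happ s₀ (Metric.mem_closedBall_self hr.le)
    simpa using this
  have hpos : 0 < ‖F s₀‖ := norm_pos_iff.mpr (hFne s₀ (Metric.mem_closedBall_self hr.le))
  have : (3/4) * r ≤ ‖F s₀‖ := by
    have h34 : (0:ℝ) < 3/4 * r := by linarith
    exact (inv_le_inv₀ hpos h34).mp hmax
  linarith

/-- The covering/counting estimate: the measure of good `τ`'s up to `T - r` is controlled by
the number of zeros up to height `T`. -/
lemma aux_count {σ₁ σ₂ r : ℝ} {s₀ : ℂ} (hr : 0 < r) (hre : s₀.re = (σ₁ + σ₂)/2)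
    (him : s₀.im = 0) (hrr : r = (σ₂ - σ₁)/2) (h21 : σ₂ < 1) (S : Set ℝ)
    (hS : ∀ τ ∈ S, r < τ → ∃ z ∈ Metric.ball s₀ r, riemannZeta (z + τ * Complex.I) = 0)
    (T : ℝ) :
    (volume (S ∩ Set.Icc 0 (T - r))).toReal
      ≤ (r + 1) + 2 * r * (zeroCount riemannZeta σ₁ σ₂ T : ℝ) := by
  set Z := {ρ : ℂ | riemannZeta ρ = 0 ∧ σ₁ ≤ ρ.re ∧ ρ.re ≤ σ₂ ∧ 0 ≤ ρ.im ∧ ρ.im ≤ T} with hZdef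
  have hfin : Z.Finite := aux_zeta_zeros_finite h21
  have hcover : S ∩ Set.Icc 0 (T - r)
      ⊆ Set.Icc 0 (r + 1) ∪ ⋃ ρ ∈ hfin.toFinset, Set.Ioo (ρ.im - r) (ρ.im + r) := by
    rintro τ ⟨hτS, hτ0, hτT⟩
    rcases le_or_gt τ (r + 1) with h | h
    · exact Or.inl ⟨hτ0, h⟩
    · right
      obtain ⟨z, hzball, hzzero⟩ := hS τ hτS (by linarith)
      have hzd : dist z s₀ < r := Metric.mem_ball.mp hzball
      have hzre : |z.re - s₀.re| < r := by
        calc |z.re - s₀.re| = |(z - s₀).re| := by simp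
          _ ≤ ‖z - s₀‖ := Complex.abs_re_le_norm _
          _ < r := by rw [← Complex.dist_eq]; exact hzd
      have hzim : |z.im - s₀.im| < r := by
        calc |z.im - s₀.im| = |(z - s₀).im| := by simp
          _ ≤ ‖z - s₀‖ := Complex.abs_im_le_norm _
          _ < r := by rw [← Complex.dist_eq]; exact hzd
      rw [him, sub_zero] at hzim
      rw [hre] at hzre
      rw [abs_lt] at hzre hzim
      set ρ := z + (τ : ℂ) * Complex.I with hρdef
      have hρre : ρ.re = z.re := by simp [hρdef]
      have hρim : ρ.im = z.im + τ := by simp [hρdef]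
      have hρZ : ρ ∈ hfin.toFinset := by
        rw [Set.Finite.mem_toFinset]
        refine ⟨hzzero, ?_, ?_, ?_, ?_⟩
        · rw [hρre]; rw [hrr] at hzre; linarith [hzre.1]
        · rw [hρre]; rw [hrr] at hzre; linarith [hzre.2]
        · rw [hρim]; linarith [hzim.1]
        · rw [hρim]; linarith [hzim.2]
      exact Set.mem_biUnion hρZ ⟨by rw [hρim]; linarith [hzim.2], by rw [hρim]; linarith [hzim.1]⟩
  have hmeas : volume (S ∩ Set.Icc 0 (T - r))
      ≤ ENNReal.ofReal ((r + 1) + 2 * r * (zeroCount riemannZeta σ₁ σ₂ T : ℝ)) := by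
    calc volume (S ∩ Set.Icc 0 (T - r))
        ≤ volume (Set.Icc (0:ℝ) (r + 1) ∪ ⋃ ρ ∈ hfin.toFinset, Set.Ioo (ρ.im - r) (ρ.im + r)) :=
          measure_mono hcover
      _ ≤ volume (Set.Icc (0:ℝ) (r + 1))
          + volume (⋃ ρ ∈ hfin.toFinset, Set.Ioo (ρ.im - r) (ρ.im + r)) := measure_union_le _ _
      _ ≤ ENNReal.ofReal (r + 1) + ∑ ρ ∈ hfin.toFinset, volume (Set.Ioo (ρ.im - r) (ρ.im + r)) := by
          gcongr
          · rw [Real.volume_Icc, sub_zero]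
          · exact measure_biUnion_finset_le _ _
      _ = ENNReal.ofReal (r + 1) + ∑ ρ ∈ hfin.toFinset, ENNReal.ofReal (2 * r) := by
          congr 1
          refine Finset.sum_congr rfl fun ρ _ => ?_
          rw [Real.volume_Ioo]
          congr 1
          ring
      _ = ENNReal.ofReal (r + 1) + (hfin.toFinset.card : ENNReal) * ENNReal.ofReal (2 * r) := by
          rw [Finset.sum_const, nsmul_eq_mul]
      _ ≤ ENNReal.ofReal ((r + 1) + 2 * r * (zeroCount riemannZeta σ₁ σ₂ T : ℝ)) := by
          have hcard : hfin.toFinset.card = zeroCount riemannZeta σ₁ σ₂ T := by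
            rw [zeroCount, Set.ncard_eq_toFinset_card _ hfin]
          rw [hcard, ← ENNReal.ofReal_natCast, ← ENNReal.ofReal_mul (by positivity),
            ← ENNReal.ofReal_add (by positivity) (by positivity)]
          apply ENNReal.ofReal_le_ofReal
          ring_nf
          rfl
  exact ENNReal.toReal_le_of_le_ofReal (by positivity) hmeas

/-- Strong universality of `ζ` would force `≥ CT` zeros in substrips of `D(1/2,1)`;
hence, by the zero-density estimate `N(T;σ₁,σ₂;ζ) = o(T)`, the Riemann zeta-function
is not strongly universal in `D(1/2,1)`. -/
theorem zeta_not_strongly_universal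
    (hZD : ∀ σ₁ σ₂ : ℝ, 1/2 < σ₁ → σ₁ < σ₂ → σ₂ < 1 →
      Tendsto (fun T : ℝ => (zeroCount riemannZeta σ₁ σ₂ T : ℝ) / T) atTop (nhds 0)) :
    (ZetaStronglyUniversal → ∀ σ₁ σ₂ : ℝ, 1/2 < σ₁ → σ₁ < σ₂ → σ₂ < 1 →
      ∃ C : ℝ, 0 < C ∧ ∀ᶠ T in atTop, C * T ≤ (zeroCount riemannZeta σ₁ σ₂ T : ℝ)) ∧
    ¬ ZetaStronglyUniversal := by
  have key : ZetaStronglyUniversal → ∀ σ₁ σ₂ : ℝ, 1/2 < σ₁ → σ₁ < σ₂ → σ₂ < 1 →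
      ∃ C : ℝ, 0 < C ∧ ∀ᶠ T in atTop, C * T ≤ (zeroCount riemannZeta σ₁ σ₂ T : ℝ) := by
    intro hU σ₁ σ₂ h1 h12 h21
    set r : ℝ := (σ₂ - σ₁)/2 with hrdef
    have hr : 0 < r := by rw [hrdef]; linarith
    set s₀ : ℂ := (((σ₁ + σ₂)/2 : ℝ) : ℂ) with hs₀def
    have hs₀re : s₀.re = (σ₁ + σ₂)/2 := by rw [hs₀def]; exact Complex.ofReal_re _
    have hs₀im : s₀.im = 0 := by rw [hs₀def]; exact Complex.ofReal_im _
    have hKsub : Metric.closedBall s₀ r ⊆ {s : ℂ | 1/2 < s.re ∧ s.re < 1} := by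
      intro z hz
      have hzre : |z.re - s₀.re| ≤ r := by
        calc |z.re - s₀.re| = |(z - s₀).re| := by simp
          _ ≤ ‖z - s₀‖ := Complex.abs_re_le_norm _
          _ ≤ r := by rw [← Complex.dist_eq]; exact Metric.mem_closedBall.mp hz
      rw [hs₀re, abs_le] at hzre
      constructor
      · rw [hrdef] at hzre
        linarith [hzre.1]
      · rw [hrdef] at hzre
        linarith [hzre.2]
    have hc := hU (Metric.closedBall s₀ r) (ProperSpace.isCompact_closedBall s₀ r) hKsub
      (aux_isConnected_compl_closedBall s₀ hr) (fun s => s - s₀)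
      ((continuous_id.sub continuous_const).continuousOn)
      ((differentiable_id.sub_const s₀).differentiableOn) (r/4) (by positivity)
    set S := {τ : ℝ | ∀ s ∈ Metric.closedBall s₀ r,
      ‖riemannZeta (s + τ * Complex.I) - (s - s₀)‖ < r/4} with hSdef
    set c := lowerDensity S with hcdef
    have hcpos : 0 < c := hc
    have hS : ∀ τ ∈ S, r < τ → ∃ z ∈ Metric.ball s₀ r, riemannZeta (z + τ * Complex.I) = 0 :=
      fun τ hτ hrτ => aux_exists_zero hs₀im hr hrτ hτ
    refine ⟨c/(8*r), by positivity, ?_⟩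
    have hbd : IsBoundedUnder (· ≥ ·) atTop
        (fun T : ℝ => (volume (S ∩ Set.Icc 0 T)).toReal / T) := by
      refine ⟨0, eventually_map.mpr ?_⟩
      filter_upwards [eventually_gt_atTop (0:ℝ)] with T hT
      exact div_nonneg ENNReal.toReal_nonneg hT.le
    have hev1 : ∀ᶠ T in atTop, c/2 < (volume (S ∩ Set.Icc 0 T)).toReal / T := by
      apply eventually_lt_of_lt_liminf _ hbd
      exact (show c/2 < c by linarith)
    have htend : Tendsto (fun T : ℝ => T - r) atTop atTop :=
      tendsto_atTop_add_const_right atTop (-r) tendsto_id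
    have hev2 : ∀ᶠ T in atTop,
        c/2 < (volume (S ∩ Set.Icc 0 (T - r))).toReal / (T - r) := htend.eventually hev1
    filter_upwards [hev2, eventually_ge_atTop (r + 1 + 2*r + (4*r + 4)/c + 1)] with T hLT hT
    have hTlb : 2*r + (4*r + 4)/c ≤ T := by
      have : 0 < (4*r + 4)/c := by positivity
      linarith
    have hTr : 0 < T - r := by
      have : 0 ≤ (4*r + 4)/c := by positivity
      linarith
    have hcount := aux_count hr hs₀re hs₀im hrdef h21 S hS T
    set L := (volume (S ∩ Set.Icc 0 (T - r))).toReal with hLdef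
    have hL0 : 0 ≤ L := ENNReal.toReal_nonneg
    have hmul : c/2 * (T - r) < L := by
      rw [lt_div_iff₀ hTr] at hLT
      linarith
    have hdiv : c * ((4*r + 4)/c) = 4*r + 4 := mul_div_cancel₀ _ hcpos.ne'
    have hcT : 2*c*r + 4*r + 4 ≤ c * T := by
      have := mul_le_mul_of_nonneg_left hTlb hcpos.le
      rw [mul_add, hdiv] at this
      linarith
    rw [div_mul_eq_mul_div, div_le_iff₀ (by positivity : (0:ℝ) < 8*r)]
    set N : ℝ := (zeroCount riemannZeta σ₁ σ₂ T : ℝ) with hNdef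
    have hN0 : 0 ≤ N := Nat.cast_nonneg _
    nlinarith [hcount, hmul, hcT, hcpos, hr]
  refine ⟨key, fun hU => ?_⟩
  obtain ⟨C, hC, hev⟩ := key hU (3/5) (7/10) (by norm_num) (by norm_num) (by norm_num)
  have htend := hZD (3/5) (7/10) (by norm_num) (by norm_num) (by norm_num)
  have hsmall : ∀ᶠ T in atTop, (zeroCount riemannZeta (3/5) (7/10) T : ℝ) / T < C :=
    htend.eventually_lt_const hC
  have : ∀ᶠ T : ℝ in atTop, False := by
    filter_upwards [hev, hsmall, eventually_gt_atTop (0:ℝ)] with T h1 h2 h3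
    rw [div_lt_iff₀ h3] at h2
    linarith
  exact this.exists.elim (fun _ h => h)
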